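/- (Online gradient descent regret.) Let K ⊆ ℝⁿ be a nonempty compact convex set with Euclidean diameter at most D, and let f_1, …, f_T : K → ℝ be concave differentiable functions with ‖∇f_t(x)‖ ≤ G for all x ∈ K and all t. Fix η > 0, let x_1 ∈ K be arbitrary, and define x_{t+1} = proj_K( x_t + η·∇f_t(x_t) ) for t = 1,…,T−1, where proj_K is the Euclidean projection onto K. Then for every x* ∈ K, Σ_{t=1}^T f_t(x*) − Σ_{t=1}^T f_t(x_t) ≤ η·T·G² + D²/η. -/

import Mathlib

open Filter

local notation "⟪" a ", " b "⟫" => @inner ℝ _ _ a b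

/-- Gradient inequality for concave differentiable functions. -/
lemma concave_grad_ineq {E : Type*} [NormedAddCommGroup E] [InnerProductSpace ℝ E]
    [CompleteSpace E] {K : Set E} {f : E → ℝ}
    (hf : ConcaveOn ℝ K f) (hd : Differentiable ℝ f) {a b : E}
    (ha : a ∈ K) (hb : b ∈ K) :
    f b - f a ≤ ⟪gradient f a, b - a⟫ := by
  set v := b - a with hv
  set g : ℝ → ℝ := fun τ => f (a + τ • v) with hg
  have h1 : HasDerivAt (fun τ : ℝ => a + τ • v) v 0 := by
    simpa using ((hasDerivAt_id (0:ℝ)).smul_const v).const_add a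
  have h2 : HasDerivAt g ((fderiv ℝ f a) v) 0 := by
    have := ((hd (a + (0:ℝ) • v)).hasFDerivAt).comp_hasDerivAt 0 h1
    simp only [zero_smul, add_zero] at this; exact this
  have hg0 : g 0 = f a := by simp [hg]
  have hg1 : g 1 = f b := by simp [hg, hv]
  have hslope : Tendsto (slope g 0) (nhdsWithin 0 (Set.Ioi (0:ℝ))) (nhds ((fderiv ℝ f a) v)) :=
    (hasDerivAt_iff_tendsto_slope.mp h2).mono_left
      (nhdsWithin_mono _ (fun τ hτ => ne_of_gt hτ))
  have hev : ∀ᶠ τ in nhdsWithin 0 (Set.Ioi (0:ℝ)), g 1 - g 0 ≤ slope g 0 τ := by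
    filter_upwards [Ioc_mem_nhdsGT_of_mem ⟨le_refl (0:ℝ), zero_lt_one⟩] with τ hτ
    obtain ⟨hτ0, hτ1⟩ := hτ
    have hcomb : a + τ • v = (1 - τ) • a + τ • b := by
      rw [hv, sub_smul, one_smul, smul_sub]; abel
    have hcc := hf.2 ha hb (by linarith : (0:ℝ) ≤ 1 - τ) (le_of_lt hτ0) (by ring)
    have hgτ : (1 - τ) * f a + τ * f b ≤ g τ := by
      rw [hg]; simp only [hcomb]; simpa using hcc
    have hs : slope g 0 τ = (g τ - g 0) / τ := by
      rw [slope_def_field]; rw [sub_zero]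
    rw [hs, le_div_iff₀ hτ0, hg0, hg1]
    nlinarith [hgτ]
  have hge := ge_of_tendsto hslope hev
  have hinner : ⟪gradient f a, v⟫ = (fderiv ℝ f a) v := by
    rw [gradient, ← InnerProductSpace.toDual_apply_apply, LinearIsometryEquiv.apply_symm_apply]
  rw [hinner]
  rw [hg0, hg1] at hge
  linarith [hge]

/-- Projection is nonexpansive (squared form). -/
lemma proj_sq_le {E : Type*} [NormedAddCommGroup E] [InnerProductSpace ℝ E]
    {K : Set E} (hK : Convex ℝ K) {p q z : E} (hq : q ∈ K) (hz : z ∈ K)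
    (hmin : ∀ y ∈ K, ‖q - p‖ ≤ ‖y - p‖) :
    ‖q - z‖ ^ 2 ≤ ‖p - z‖ ^ 2 := by
  haveI : Nonempty K := ⟨⟨q, hq⟩⟩
  have heq : ‖p - q‖ = ⨅ w : K, ‖p - w‖ := by
    refine le_antisymm (le_ciInf fun w => ?_) (ciInf_le (⟨0, fun _ ⟨w, hw⟩ => hw ▸ norm_nonneg _⟩ : BddBelow (Set.range fun w : K => ‖p - (w:E)‖)) ⟨q, hq⟩)
    rw [norm_sub_rev p q, norm_sub_rev p w]
    exact hmin w w.2
  have hvar : ⟪p - q, z - q⟫ ≤ 0 :=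
    (norm_eq_iInf_iff_real_inner_le_zero hK hq).mp heq z hz
  have hexp : ‖p - z‖ ^ 2 = ‖p - q‖ ^ 2 + 2 * ⟪p - q, q - z⟫ + ‖q - z‖ ^ 2 := by
    have h := @norm_add_sq_real E _ _ (p - q) (q - z)
    rw [show p - q + (q - z) = p - z by abel] at h
    linarith [h]
  have : ⟪p - q, q - z⟫ = - ⟪p - q, z - q⟫ := by
    rw [show q - z = -(z - q) by abel, inner_neg_right]
  nlinarith [norm_nonneg (p - q), sq_nonneg ‖p - q‖]

/-- Online gradient descent (projected gradient ascent for concave rewards) regret bound: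
if `K` is nonempty compact convex with diameter at most `D`, the rewards `f_t` are concave
and differentiable with `‖∇f_t‖ ≤ G` on `K`, and `x_{t+1}` is the Euclidean projection of
`x_t + η·∇f_t(x_t)` onto `K` (characterized as the closest point of `K`), then the regret
is at most `η·T·G² + D²/η`. -/
theorem stmt13 (n T : ℕ) (η D G : ℝ) (hη : 0 < η)
    (K : Set (EuclideanSpace ℝ (Fin n)))
    (hKne : K.Nonempty) (hKcompact : IsCompact K) (hKconvex : Convex ℝ K)
    (hKD : ∀ x ∈ K, ∀ y ∈ K, ‖x - y‖ ≤ D)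
    (f : ℕ → EuclideanSpace ℝ (Fin n) → ℝ)
    (hconc : ∀ t < T, ConcaveOn ℝ K (f t))
    (hdiff : ∀ t < T, Differentiable ℝ (f t))
    (hG : ∀ t < T, ∀ x ∈ K, ‖gradient (f t) x‖ ≤ G)
    (x : ℕ → EuclideanSpace ℝ (Fin n)) (hx0 : x 0 ∈ K)
    (hproj : ∀ t, t + 1 < T →
      x (t + 1) ∈ K ∧
      ∀ y ∈ K, ‖x (t + 1) - (x t + η • gradient (f t) (x t))‖
                 ≤ ‖y - (x t + η • gradient (f t) (x t))‖) :
    ∀ xstar ∈ K,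
      ∑ t ∈ Finset.range T, f t xstar - ∑ t ∈ Finset.range T, f t (x t)
        ≤ η * T * G ^ 2 + D ^ 2 / η := by
  intro xstar hxs
  have hD0 : (0:ℝ) ≤ D := by simpa using hKD xstar hxs xstar hxs
  rcases Nat.eq_zero_or_pos T with hT0 | hTpos
  · subst hT0
    simp only [Finset.range_zero, Finset.sum_empty, sub_zero, Nat.cast_zero, mul_zero, zero_mul,
      zero_add]
    positivity
  have hxK : ∀ t, t < T → x t ∈ K := by
    intro t ht
    cases t with
    | zero => exact hx0
    | succ s => exact (hproj s ht).1
  set g : ℕ → EuclideanSpace ℝ (Fin n) := fun t => gradient (f t) (x t) with hgdef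
  set a : ℕ → ℝ := fun t => ‖x t - xstar‖ ^ 2 with hadef
  -- per-step bound for non-final steps
  have key : ∀ t, t + 1 < T →
      2 * η * (f t xstar - f t (x t)) ≤ a t - a (t + 1) + η ^ 2 * G ^ 2 := by
    intro t ht
    have htT : t < T := by omega
    have hgrad := concave_grad_ineq (hconc t htT) (hdiff t htT) (hxK t htT) hxs
    have hgb : ‖g t‖ ≤ G := hG t htT (x t) (hxK t htT)
    have hgb2 : ‖g t‖ ^ 2 ≤ G ^ 2 := by
      have := norm_nonneg (g t); nlinarith
    have hquad := proj_sq_le hKconvex (hproj t ht).1 hxs (hproj t ht).2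
    have hexp : ‖x t + η • g t - xstar‖ ^ 2
        = a t + 2 * (η * ⟪x t - xstar, g t⟫) + η ^ 2 * ‖g t‖ ^ 2 := by
      have h := @norm_add_sq_real (EuclideanSpace ℝ (Fin n)) _ _ (x t - xstar) (η • g t)
      rw [show x t - xstar + η • g t = x t + η • g t - xstar from by abel] at h
      rw [h, real_inner_smul_right, norm_smul, Real.norm_eq_abs, abs_of_pos hη]
      simp only [hadef]; ring
    have hswap : ⟪g t, xstar - x t⟫ = - ⟪x t - xstar, g t⟫ := by
      rw [real_inner_comm, show xstar - x t = -(x t - xstar) from by abel, inner_neg_left]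
    rw [hexp] at hquad
    have hquad' : a (t + 1) ≤ ‖x (t+1) - xstar‖ ^ 2 := le_of_eq rfl
    nlinarith [hgrad, hquad, hgb2, sq_nonneg η, hη]
  -- bound for the final step
  have hT1 : T - 1 < T := by omega
  have last : 2 * η * (f (T-1) xstar - f (T-1) (x (T-1))) ≤ η ^ 2 * G ^ 2 + D ^ 2 := by
    have hgrad := concave_grad_ineq (hconc (T-1) hT1) (hdiff (T-1) hT1) (hxK (T-1) hT1) hxs
    have h1 : ‖g (T-1)‖ ≤ G := hG (T-1) hT1 (x (T-1)) (hxK (T-1) hT1)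
    have h2 : ‖xstar - x (T-1)‖ ≤ D := hKD xstar hxs (x (T-1)) (hxK (T-1) hT1)
    have h3 := real_inner_le_norm (g (T-1)) (xstar - x (T-1))
    have h4 : ‖g (T-1)‖ * ‖xstar - x (T-1)‖ ≤ G * D :=
      mul_le_mul h1 h2 (norm_nonneg _) (le_trans (norm_nonneg _) h1)
    nlinarith [sq_nonneg (η * G - D), hη, hgrad, h3, h4]
  -- telescoped bound
  have main : ∀ m, m ≤ T - 1 →
      2 * η * (∑ t ∈ Finset.range m, (f t xstar - f t (x t)))
        ≤ (a 0 - a m) + m * (η ^ 2 * G ^ 2) := by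
    intro m
    induction m with
    | zero => intro _; simp
    | succ k ih =>
      intro hk
      have hk' : k ≤ T - 1 := by omega
      have hkT : k + 1 < T := by omega
      have h1 := ih hk'
      have h2 := key k hkT
      rw [Finset.sum_range_succ, mul_add]
      push_cast
      linarith
  have hmain := main (T - 1) le_rfl
  have ha0 : a 0 ≤ D ^ 2 := by
    have h := hKD (x 0) hx0 xstar hxs
    have := norm_nonneg (x 0 - xstar)
    simp only [hadef]; nlinarith
  have haT : 0 ≤ a (T - 1) := by simp only [hadef]; positivity
  set S := ∑ t ∈ Finset.range T, (f t xstar - f t (x t)) with hSdef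
  have hTsplit : T = (T - 1) + 1 := by omega
  have hSsplit : S = (∑ t ∈ Finset.range (T-1), (f t xstar - f t (x t)))
      + (f (T-1) xstar - f (T-1) (x (T-1))) := by
    rw [hSdef]
    conv_lhs => rw [hTsplit]
    rw [Finset.sum_range_succ]
  have hcast : ((T - 1 : ℕ) : ℝ) = (T : ℝ) - 1 := by
    have : (1:ℕ) ≤ T := hTpos
    push_cast [Nat.cast_sub this]
    ring
  have hSbound : 2 * η * S ≤ 2 * D ^ 2 + (T:ℝ) * (η ^ 2 * G ^ 2) := by
    rw [hSsplit, mul_add]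
    rw [hcast] at hmain
    nlinarith [hmain, last, ha0, haT]
  have hgoal : ∑ t ∈ Finset.range T, f t xstar - ∑ t ∈ Finset.range T, f t (x t) = S := by
    rw [hSdef, Finset.sum_sub_distrib]
  rw [hgoal]
  have h2η : (0:ℝ) < 2 * η := by linarith
  have hrhs : 2 * η * (η * T * G ^ 2 + D ^ 2 / η) = 2 * ((T:ℝ) * (η ^ 2 * G ^ 2)) + 2 * D ^ 2 := by
    field_simp
  have hTnn : (0:ℝ) ≤ (T:ℝ) * (η ^ 2 * G ^ 2) := by positivity
  have hfin : 2 * η * S ≤ 2 * η * (η * T * G ^ 2 + D ^ 2 / η) := by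
    rw [hrhs]; linarith
  exact (mul_le_mul_iff_right₀ h2η).mp hfin
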